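/- Let (F, F₂, F₀, γ) be a monoidal functor with anomaly from a strict monoidal category C to a k-linear strict monoidal category D with k-bilinear tensor product, with chosen splittings p_X, q_X of the idempotents Π_X, and let F̃ be the unitalized functor with F̃₂(X,Y) := p_{X⊗Y}∘F₂(X,Y)∘(q_X⊗q_Y). Then F̃₂ is natural with respect to F̃: for all morphisms f : X → X' and g : Y → Y' of C, F̃₂(X',Y')∘(F̃(f)⊗F̃(g)) = F̃(f⊗g)∘F̃₂(X,Y). -/

import Mathlib

open CategoryTheory MonoidalCategory

/-- With `F̃(f) = p ∘ F(f) ∘ q` and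
`F̃₂(X,Y) = p_{X⊗Y} ∘ F₂(X,Y) ∘ (q_X ⊗ q_Y)`, the family `F̃₂` is natural with
respect to `F̃`: `F̃₂(X',Y') ∘ (F̃(f) ⊗ F̃(g)) = F̃(f⊗g) ∘ F̃₂(X,Y)`. -/
theorem stmt_10 {k : Type*} [Field k]
    {C : Type*} [Category C] [MonoidalCategory C]
    {D : Type*} [Category D] [Preadditive D] [Linear k D] [MonoidalCategory D]
    [MonoidalPreadditive D] [MonoidalLinear k D]
    (γ : ∀ {X Y Z : C}, (X ⟶ Y) → (Y ⟶ Z) → kˣ)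
    (hcocycle : ∀ {X Y Z W : C} (f : X ⟶ Y) (g : Y ⟶ Z) (h : Z ⟶ W),
      γ f (g ≫ h) * γ g h = γ (f ≫ g) h * γ f g)
    (hγmon : ∀ {X Y Z X' Y' Z' : C} (f : X ⟶ Y) (g : Y ⟶ Z)
      (f' : X' ⟶ Y') (g' : Y' ⟶ Z'),
      γ (f ⊗ₘ f') (g ⊗ₘ g') = γ f g * γ f' g')
    (Fobj : C → D) (Fmap : ∀ {X Y : C}, (X ⟶ Y) → (Fobj X ⟶ Fobj Y))
    (hF : ∀ {X Y Z : C} (f : X ⟶ Y) (g : Y ⟶ Z),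
      Fmap (f ≫ g) = (γ f g : k) • (Fmap f ≫ Fmap g))
    (F₂ : ∀ X Y : C, Fobj X ⊗ Fobj Y ⟶ Fobj (X ⊗ Y))
    (F₀ : 𝟙_ D ⟶ Fobj (𝟙_ C))
    (hF₂nat : ∀ {X X' Y Y' : C} (f : X ⟶ X') (g : Y ⟶ Y'),
      F₂ X Y ≫ Fmap (f ⊗ₘ g) = (Fmap f ⊗ₘ Fmap g) ≫ F₂ X' Y')
    (hassoc : ∀ X Y Z : C,
      (F₂ X Y ⊗ₘ 𝟙 (Fobj Z)) ≫ F₂ (X ⊗ Y) Z ≫ Fmap (α_ X Y Z).hom =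
        (α_ (Fobj X) (Fobj Y) (Fobj Z)).hom ≫ (𝟙 (Fobj X) ⊗ₘ F₂ Y Z) ≫ F₂ X (Y ⊗ Z))
    (hrunit : ∀ X : C,
      (𝟙 (Fobj X) ⊗ₘ F₀) ≫ F₂ X (𝟙_ C) ≫ Fmap (ρ_ X).hom = (ρ_ (Fobj X)).hom)
    (hlunit : ∀ X : C,
      (F₀ ⊗ₘ 𝟙 (Fobj X)) ≫ F₂ (𝟙_ C) X ≫ Fmap (λ_ X).hom = (λ_ (Fobj X)).hom)
    (Ftobj : C → D)
    (p : ∀ X : C, Fobj X ⟶ Ftobj X) (q : ∀ X : C, Ftobj X ⟶ Fobj X)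
    (hpq : ∀ X : C, q X ≫ p X = 𝟙 (Ftobj X))
    (hqp : ∀ X : C, p X ≫ q X = (γ (𝟙 X) (𝟙 X) : k) • Fmap (𝟙 X))
    :
    ∀ {X X' Y Y' : C} (f : X ⟶ X') (g : Y ⟶ Y'),
      ((q X ≫ Fmap f ≫ p X') ⊗ₘ (q Y ≫ Fmap g ≫ p Y')) ≫
          ((q X' ⊗ₘ q Y') ≫ F₂ X' Y' ≫ p (X' ⊗ Y')) =
        ((q X ⊗ₘ q Y) ≫ F₂ X Y ≫ p (X ⊗ Y)) ≫
          (q (X ⊗ Y) ≫ Fmap (f ⊗ₘ g) ≫ p (X' ⊗ Y')) := by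

  intro X X' Y Y' f g
  have keyR : ∀ {A B : C} (h : A ⟶ B), Fmap h ≫ (p B ≫ q B) = Fmap h := by
    intro A B h
    have hc := hcocycle h (𝟙 B) (𝟙 B)
    simp only [Category.comp_id, Category.id_comp] at hc
    have hγ : γ (𝟙 B) (𝟙 B) = γ h (𝟙 B) := mul_left_cancel hc
    have hFh := hF h (𝟙 B)
    simp only [Category.comp_id] at hFh
    rw [hqp, Linear.comp_smul, hγ, ← hFh]
  have keyL : ∀ {A B : C} (h : A ⟶ B), (p A ≫ q A) ≫ Fmap h = Fmap h := by
    intro A B h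
    have hc := hcocycle (𝟙 A) (𝟙 A) h
    simp only [Category.comp_id, Category.id_comp] at hc
    have hγ : γ (𝟙 A) (𝟙 A) = γ (𝟙 A) h := (mul_left_cancel hc).symm
    have hFh := hF (𝟙 A) h
    simp only [Category.id_comp] at hFh
    rw [hqp, Linear.smul_comp, hγ, ← hFh]
  have e1 : (q X ≫ Fmap f ≫ p X') ≫ q X' = q X ≫ Fmap f := by
    rw [Category.assoc, Category.assoc, keyR]
  have e2 : (q Y ≫ Fmap g ≫ p Y') ≫ q Y' = q Y ≫ Fmap g := by
    rw [Category.assoc, Category.assoc, keyR]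
  calc ((q X ≫ Fmap f ≫ p X') ⊗ₘ (q Y ≫ Fmap g ≫ p Y')) ≫
        ((q X' ⊗ₘ q Y') ≫ F₂ X' Y' ≫ p (X' ⊗ Y'))
      = (((q X ≫ Fmap f ≫ p X') ≫ q X') ⊗ₘ ((q Y ≫ Fmap g ≫ p Y') ≫ q Y')) ≫
          F₂ X' Y' ≫ p (X' ⊗ Y') := by
        rw [← Category.assoc, tensorHom_comp_tensorHom]
    _ = (q X ⊗ₘ q Y) ≫ (Fmap f ⊗ₘ Fmap g) ≫ F₂ X' Y' ≫ p (X' ⊗ Y') := by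
        rw [e1, e2, ← tensorHom_comp_tensorHom, Category.assoc]
    _ = (q X ⊗ₘ q Y) ≫ F₂ X Y ≫ Fmap (f ⊗ₘ g) ≫ p (X' ⊗ Y') := by
        rw [← Category.assoc (Fmap f ⊗ₘ Fmap g), ← hF₂nat, Category.assoc]
    _ = ((q X ⊗ₘ q Y) ≫ F₂ X Y ≫ p (X ⊗ Y)) ≫
          (q (X ⊗ Y) ≫ Fmap (f ⊗ₘ g) ≫ p (X' ⊗ Y')) := by
        simp only [Category.assoc]
        rw [show p (X ⊗ Y) ≫ q (X ⊗ Y) ≫ Fmap (f ⊗ₘ g) ≫ p (X' ⊗ Y') =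
            Fmap (f ⊗ₘ g) ≫ p (X' ⊗ Y') from by
          rw [← Category.assoc, ← Category.assoc, keyL]]
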